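/- Let i : A → B be an inner anodyne map of simplicial sets, Y an algebraic quasi-category, and g : F_Q(A) → Y a morphism in AlgQ. Then the pushout Y ⊔_{F_Q(A)} F_Q(B) of F_Q(i) along g exists in AlgQ, and the underlying simplicial map of the induced morphism Y → Y ⊔_{F_Q(A)} F_Q(B) is inner anodyne. -/

import Mathlib

/-!
Common definitions for formalizing "Algebraic models for higher categories"
(T. Nikolaus, arXiv:1003.1342): algebraic Kan complexes, algebraic
quasi-categories, model structures, Quillen equivalences, local presentability,
anodyne maps, the fundamental ∞-groupoid and the reduced geometric realization.
-/

universe w₂ w v₂ v u₂ u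

open CategoryTheory CategoryTheory.Limits Simplicial SSet

namespace AlgebraicModels

/-- The morphisms having the left lifting property against every morphism in `P`. -/
def llp {C : Type u} [Category.{v} C] (P : MorphismProperty C) : MorphismProperty C :=
  fun _ _ f => ∀ ⦃X Y : C⦄ (g : X ⟶ Y), P g → HasLiftingProperty f g

/-- The morphisms having the right lifting property against every morphism in `P`. -/
def rlp {C : Type u} [Category.{v} C] (P : MorphismProperty C) : MorphismProperty C :=
  fun _ _ f => ∀ ⦃X Y : C⦄ (g : X ⟶ Y), P g → HasLiftingProperty g f

/-- The horn inclusions `Λ[n, i] ⟶ Δ[n]`, `n ≥ 1`, `0 ≤ i ≤ n`. -/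
inductive hornInclusions : ∀ ⦃X Y : SSet.{0}⦄, (X ⟶ Y) → Prop where
  | mk (n : ℕ) (hn : 1 ≤ n) (i : Fin (n + 1)) : hornInclusions (Λ[n, i].ι)

/-- The inner horn inclusions `Λ[n, i] ⟶ Δ[n]`, `0 < i < n` (hence `n ≥ 2`). -/
inductive innerHornInclusions : ∀ ⦃X Y : SSet.{0}⦄, (X ⟶ Y) → Prop where
  | mk (n : ℕ) (i : Fin (n + 1)) (h0 : 0 < i.val) (hn : i.val < n) :
      innerHornInclusions (Λ[n, i].ι)

/-- The boundary inclusions `∂Δ[n] ⟶ Δ[n]`. -/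
inductive boundaryInclusions : ∀ ⦃X Y : SSet.{0}⦄, (X ⟶ Y) → Prop where
  | mk (n : ℕ) : boundaryInclusions (∂Δ[n].ι)

/-- Anodyne maps: the weakly saturated class generated by the horn inclusions,
characterized (via the small object argument) as the maps having the left lifting
property against every map with the right lifting property against all horn
inclusions; these are the trivial cofibrations of the Kan–Quillen model structure. -/
def anodyne : MorphismProperty SSet.{0} := llp (rlp (fun _ _ f => hornInclusions f))

/-- Inner anodyne maps: the weakly saturated class generated by the inner horn
inclusions. -/
def innerAnodyne : MorphismProperty SSet.{0} :=
  llp (rlp (fun _ _ f => innerHornInclusions f))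

/-- Kan fibrations: right lifting property against all horn inclusions. -/
def kanFibration : MorphismProperty SSet.{0} := rlp (fun _ _ f => hornInclusions f)

/-- Trivial Kan fibrations: right lifting property against all boundary inclusions. -/
def trivialKanFibration : MorphismProperty SSet.{0} :=
  rlp (fun _ _ f => boundaryInclusions f)

/-- Weak homotopy equivalences of simplicial sets, characterized as the maps
factoring as an anodyne map followed by a trivial Kan fibration (this is exactly the
class of weak equivalences of the Kan–Quillen model structure on `SSet`). -/
def weakHomotopyEquiv : MorphismProperty SSet.{0} := fun X Y f =>
  ∃ (Z : SSet.{0}) (i : X ⟶ Z) (p : Z ⟶ Y), anodyne i ∧ trivialKanFibration p ∧ i ≫ p = f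

/-- An algebraic Kan complex: a simplicial set with a distinguished filler for every
horn `Λ[n, i] ⟶ X`, `n ≥ 1`, `0 ≤ i ≤ n`. -/
structure AlgKan : Type 1 where
  carrier : SSet.{0}
  filler : ∀ ⦃n : ℕ⦄ (i : Fin (n + 1)), 1 ≤ n → ((Λ[n, i] : SSet) ⟶ carrier) → (Δ[n] ⟶ carrier)
  filler_spec : ∀ ⦃n : ℕ⦄ (i : Fin (n + 1)) (hn : 1 ≤ n) (h : (Λ[n, i] : SSet) ⟶ carrier),
    Λ[n, i].ι ≫ filler i hn h = h

namespace AlgKan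

/-- Morphisms of algebraic Kan complexes: simplicial maps preserving the
distinguished fillers. -/
@[ext]
structure Hom (X Y : AlgKan) where
  map : X.carrier ⟶ Y.carrier
  preserves : ∀ ⦃n : ℕ⦄ (i : Fin (n + 1)) (hn : 1 ≤ n) (h : (Λ[n, i] : SSet) ⟶ X.carrier),
    X.filler i hn h ≫ map = Y.filler i hn (h ≫ map)

instance : Category.{0} AlgKan where
  Hom := Hom
  id X := ⟨𝟙 X.carrier, fun n i hn h => by simp⟩
  comp {X Y Z} f g := ⟨f.map ≫ g.map, fun n i hn h => by
    rw [← Category.assoc, f.preserves, g.preserves, Category.assoc]⟩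
  id_comp f := Hom.ext (Category.id_comp f.map)
  comp_id f := Hom.ext (Category.comp_id f.map)
  assoc f g h := Hom.ext (Category.assoc f.map g.map h.map)

@[simp] lemma id_map (X : AlgKan) : Hom.map (𝟙 X) = 𝟙 X.carrier := rfl

@[simp] lemma comp_map {X Y Z : AlgKan} (f : X ⟶ Y) (g : Y ⟶ Z) :
    Hom.map (f ≫ g) = f.map ≫ g.map := rfl

end AlgKan

/-- The forgetful functor from algebraic Kan complexes to simplicial sets. -/
def UA : AlgKan ⥤ SSet.{0} where
  obj X := X.carrier
  map f := f.map

/-- An algebraic quasi-category: a simplicial set with a distinguished filler for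
every inner horn `Λ[n, i] ⟶ X`, `0 < i < n`. -/
structure AlgQ : Type 1 where
  carrier : SSet.{0}
  filler : ∀ ⦃n : ℕ⦄ (i : Fin (n + 1)), 0 < i.val → i.val < n →
    ((Λ[n, i] : SSet) ⟶ carrier) → (Δ[n] ⟶ carrier)
  filler_spec : ∀ ⦃n : ℕ⦄ (i : Fin (n + 1)) (h0 : 0 < i.val) (hn : i.val < n)
    (h : (Λ[n, i] : SSet) ⟶ carrier), Λ[n, i].ι ≫ filler i h0 hn h = h

namespace AlgQ

/-- Morphisms of algebraic quasi-categories: simplicial maps preserving the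
distinguished fillers. -/
@[ext]
structure Hom (X Y : AlgQ) where
  map : X.carrier ⟶ Y.carrier
  preserves : ∀ ⦃n : ℕ⦄ (i : Fin (n + 1)) (h0 : 0 < i.val) (hn : i.val < n)
    (h : (Λ[n, i] : SSet) ⟶ X.carrier),
    X.filler i h0 hn h ≫ map = Y.filler i h0 hn (h ≫ map)

instance : Category.{0} AlgQ where
  Hom := Hom
  id X := ⟨𝟙 X.carrier, fun n i h0 hn h => by simp⟩
  comp {X Y Z} f g := ⟨f.map ≫ g.map, fun n i h0 hn h => by
    rw [← Category.assoc, f.preserves, g.preserves, Category.assoc]⟩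
  id_comp f := Hom.ext (Category.id_comp f.map)
  comp_id f := Hom.ext (Category.comp_id f.map)
  assoc f g h := Hom.ext (Category.assoc f.map g.map h.map)

@[simp] lemma id_map (X : AlgQ) : Hom.map (𝟙 X) = 𝟙 X.carrier := rfl

@[simp] lemma comp_map {X Y Z : AlgQ} (f : X ⟶ Y) (g : Y ⟶ Z) :
    Hom.map (f ≫ g) = f.map ≫ g.map := rfl

end AlgQ

/-- The forgetful functor from algebraic quasi-categories to simplicial sets. -/
def UQ : AlgQ ⥤ SSet.{0} where
  obj X := X.carrier
  map f := f.map

/-- A (closed) model structure on a category: classes of weak equivalences,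
cofibrations and fibrations on a complete and cocomplete category, satisfying
Quillen's axioms (two-out-of-three, closure under retracts, the lifting axioms
and the factorization axioms). -/
structure ModelStructure (C : Type u) [Category.{v} C] where
  weq : MorphismProperty C
  cof : MorphismProperty C
  fib : MorphismProperty C
  hasLimits : HasLimitsOfSize.{v, v} C
  hasColimits : HasColimitsOfSize.{v, v} C
  weq_comp : ∀ ⦃X Y Z : C⦄ (f : X ⟶ Y) (g : Y ⟶ Z), weq f → weq g → weq (f ≫ g)
  weq_of_comp_left : ∀ ⦃X Y Z : C⦄ (f : X ⟶ Y) (g : Y ⟶ Z), weq f → weq (f ≫ g) → weq g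
  weq_of_comp_right : ∀ ⦃X Y Z : C⦄ (f : X ⟶ Y) (g : Y ⟶ Z), weq g → weq (f ≫ g) → weq f
  weq_retract : ∀ ⦃X Y A B : C⦄ (f : X ⟶ Y) (g : A ⟶ B)
    (i : Arrow.mk f ⟶ Arrow.mk g) (r : Arrow.mk g ⟶ Arrow.mk f),
    i ≫ r = 𝟙 (Arrow.mk f) → weq g → weq f
  cof_retract : ∀ ⦃X Y A B : C⦄ (f : X ⟶ Y) (g : A ⟶ B)
    (i : Arrow.mk f ⟶ Arrow.mk g) (r : Arrow.mk g ⟶ Arrow.mk f),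
    i ≫ r = 𝟙 (Arrow.mk f) → cof g → cof f
  fib_retract : ∀ ⦃X Y A B : C⦄ (f : X ⟶ Y) (g : A ⟶ B)
    (i : Arrow.mk f ⟶ Arrow.mk g) (r : Arrow.mk g ⟶ Arrow.mk f),
    i ≫ r = 𝟙 (Arrow.mk f) → fib g → fib f
  lifting_trivCof_fib : ∀ ⦃A B X Y : C⦄ (i : A ⟶ B) (p : X ⟶ Y),
    cof i → weq i → fib p → HasLiftingProperty i p
  lifting_cof_trivFib : ∀ ⦃A B X Y : C⦄ (i : A ⟶ B) (p : X ⟶ Y),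
    cof i → fib p → weq p → HasLiftingProperty i p
  factor_trivCof_fib : ∀ ⦃X Y : C⦄ (f : X ⟶ Y), ∃ (Z : C) (i : X ⟶ Z) (p : Z ⟶ Y),
    cof i ∧ weq i ∧ fib p ∧ i ≫ p = f
  factor_cof_trivFib : ∀ ⦃X Y : C⦄ (f : X ⟶ Y), ∃ (Z : C) (i : X ⟶ Z) (p : Z ⟶ Y),
    cof i ∧ fib p ∧ weq p ∧ i ≫ p = f

namespace ModelStructure

variable {C : Type u} [Category.{v} C] (M : ModelStructure C)

/-- The trivial cofibrations of a model structure. -/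
def trivCof : MorphismProperty C := fun _ _ f => M.cof f ∧ M.weq f

/-- The trivial fibrations of a model structure. -/
def trivFib : MorphismProperty C := fun _ _ f => M.fib f ∧ M.weq f

/-- An object is fibrant iff every morphism from the source of a trivial cofibration
to it extends along the trivial cofibration (equivalently, the map to the terminal
object is a fibration). -/
def IsFibrant (X : C) : Prop :=
  ∀ ⦃A B : C⦄ (i : A ⟶ B), M.cof i → M.weq i → ∀ u : A ⟶ X, ∃ v : B ⟶ X, i ≫ v = u

/-- An object is cofibrant iff every morphism from it lifts through any trivial
fibration (equivalently, the map from the initial object is a cofibration). -/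
def IsCofibrant (X : C) : Prop :=
  ∀ ⦃E B : C⦄ (p : E ⟶ B), M.fib p → M.weq p → ∀ u : X ⟶ B, ∃ v : X ⟶ E, v ≫ p = u

/-- A model structure is cofibrantly generated by a class `I` of generating
cofibrations and a class `J` of generating trivial cofibrations if the cofibrations
are exactly `llp (rlp I)` and the trivial cofibrations are exactly `llp (rlp J)`. -/
def IsCofibrantlyGenerated (I J : MorphismProperty C) : Prop :=
  M.cof = llp (rlp I) ∧ M.trivCof = llp (rlp J)

/-- Right properness: the pullback of a weak equivalence along a fibration is a weak
equivalence. -/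
def RightProper : Prop :=
  ∀ ⦃X Y Z : C⦄ (f : X ⟶ Z) (g : Y ⟶ Z) (c : PullbackCone f g),
    IsLimit c → M.fib f → M.weq g → M.weq c.fst

end ModelStructure

/-- A Quillen adjunction, expressed through its left adjoint: the left adjoint
preserves cofibrations and trivial cofibrations. -/
def IsQuillenAdjunction {C : Type u} [Category.{v} C] {D : Type u₂} [Category.{v₂} D]
    (MC : ModelStructure C) (MD : ModelStructure D) (F : C ⥤ D) : Prop :=
  (∀ ⦃X Y : C⦄ (f : X ⟶ Y), MC.cof f → MD.cof (F.map f)) ∧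
  (∀ ⦃X Y : C⦄ (f : X ⟶ Y), MC.cof f → MC.weq f → MD.cof (F.map f) ∧ MD.weq (F.map f))

/-- A Quillen equivalence: a Quillen adjunction such that for every cofibrant `X` and
every fibrant `Y`, a map `F.obj X ⟶ Y` is a weak equivalence iff its adjunct
`X ⟶ G.obj Y` is a weak equivalence. -/
def IsQuillenEquivalence {C : Type u} [Category.{v} C] {D : Type u₂} [Category.{v₂} D]
    (MC : ModelStructure C) (MD : ModelStructure D)
    (F : C ⥤ D) (G : D ⥤ C) (adj : F ⊣ G) : Prop :=
  IsQuillenAdjunction MC MD F ∧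
  ∀ (X : C) (Y : D), MC.IsCofibrant X → MD.IsFibrant Y →
    ∀ f : F.obj X ⟶ Y, MD.weq f ↔ MC.weq ((adj.homEquiv X Y) f)

/-- A category is `κ`-filtered if every diagram of size `< κ` in it admits a cocone. -/
def IsCardinalFiltered (J : Type v) [Category.{v} J] (κ : Cardinal.{v}) : Prop :=
  ∀ (K : Type v) [Category.{v} K] (F : K ⥤ J),
    Cardinal.mk (Arrow K) < κ → Nonempty (Cocone F)

/-- An object `A` is `κ`-presentable (`κ`-small) if `Hom(A, -)` preserves `κ`-filtered
colimits. -/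
def IsPresentableObj {C : Type u} [Category.{v} C] (κ : Cardinal.{v}) (A : C) : Prop :=
  ∀ (J : Type v) [Category.{v} J], IsCardinalFiltered J κ →
    Nonempty (PreservesColimitsOfShape J (coyoneda.obj (Opposite.op A)))

/-- A category is locally presentable if it is cocomplete and there is a small family
of `κ`-presentable objects (for some regular cardinal `κ`) such that every object is a
`κ`-filtered colimit of objects of this family. -/
def IsLocallyPresentable (C : Type u) [Category.{v} C] : Prop :=
  HasColimitsOfSize.{v, v} C ∧
  ∃ κ : Cardinal.{v}, κ.IsRegular ∧
    ∃ (ι : Type v) (G : ι → C),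
      (∀ i, IsPresentableObj κ (G i)) ∧
      ∀ X : C, ∃ (J : Cat.{v, v}) (_ : IsCardinalFiltered J κ) (D : J ⥤ C) (c : Cocone D),
        (∀ j : J, ∃ i : ι, Nonempty (D.obj j ≅ G i)) ∧
        Nonempty (IsColimit c) ∧ Nonempty (c.pt ≅ X)

/-- The forgetful functor from algebraic Kan complexes to algebraic quasi-categories:
it forgets the distinguished fillers of the outer horns (and keeps those of the inner
horns), so that `V ⋙ UQ = UA`. -/
def V : AlgKan ⥤ AlgQ where
  obj X :=
    { carrier := X.carrier
      filler := fun n i h0 hn h => X.filler i (by omega) h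
      filler_spec := fun n i h0 hn h => X.filler_spec i (by omega) h }
  map {X Y} f :=
    { map := f.map
      preserves := fun n i h0 hn h => f.preserves i (by omega) h }
  map_id X := AlgQ.Hom.ext rfl
  map_comp f g := AlgQ.Hom.ext rfl

/-- The image `{ F.map (∂Δ[n] ⟶ Δ[n]) | n ≥ 1 }` of the boundary inclusions with
`n ≥ 1` under a functor `F : SSet ⥤ D`. -/
inductive imageBoundaryInclusions {D : Type u} [Category.{v} D] (F : SSet.{0} ⥤ D) :
    ∀ ⦃X Y : D⦄, (X ⟶ Y) → Prop where
  | mk (n : ℕ) (hn : 1 ≤ n) : imageBoundaryInclusions F (F.map (∂Δ[n].ι))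

/-- The image `{ F.map (Λ[n, i] ⟶ Δ[n]) | n ≥ 1, 0 ≤ i ≤ n }` of the horn inclusions
under a functor `F : SSet ⥤ D`. -/
inductive imageHornInclusions {D : Type u} [Category.{v} D] (F : SSet.{0} ⥤ D) :
    ∀ ⦃X Y : D⦄, (X ⟶ Y) → Prop where
  | mk (n : ℕ) (hn : 1 ≤ n) (i : Fin (n + 1)) :
      imageHornInclusions F (F.map (Λ[n, i].ι))

/-- The geometric realizations of the horn inclusions. -/
inductive topHornInclusions : ∀ ⦃X Y : TopCat.{0}⦄, (X ⟶ Y) → Prop where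
  | mk (n : ℕ) (hn : 1 ≤ n) (i : Fin (n + 1)) :
      topHornInclusions (SSet.toTop.map (Λ[n, i].ι))

/-- The geometric realizations of the boundary inclusions. -/
inductive topBoundaryInclusions : ∀ ⦃X Y : TopCat.{0}⦄, (X ⟶ Y) → Prop where
  | mk (n : ℕ) : topBoundaryInclusions (SSet.toTop.map (∂Δ[n].ι))

/-- Serre fibrations: right lifting property against the realized horn inclusions. -/
def serreFibration : MorphismProperty TopCat.{0} := rlp (fun _ _ f => topHornInclusions f)

/-- Trivial Serre fibrations. -/
def topTrivialFibration : MorphismProperty TopCat.{0} :=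
  rlp (fun _ _ f => topBoundaryInclusions f)

/-- Trivial cofibrations of the Quillen model structure on `Top`. -/
def topTrivialCofibration : MorphismProperty TopCat.{0} :=
  llp (rlp (fun _ _ f => topHornInclusions f))

/-- Weak homotopy equivalences of topological spaces, characterized as the maps
factoring as a trivial cofibration followed by a trivial fibration of the Quillen
model structure on `Top`. -/
def topWeakEquiv : MorphismProperty TopCat.{0} := fun X Y f =>
  ∃ (Z : TopCat.{0}) (i : X ⟶ Z) (p : Z ⟶ Y),
    topTrivialCofibration i ∧ topTrivialFibration p ∧ i ≫ p = f

/-- A choice, for every `n ≥ 1` and `0 ≤ i ≤ n`, of a continuous retraction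
`R(n,i) : |Δ[n]| ⟶ |Λ[n,i]|` of the inclusion of the geometric horn into the
geometric `n`-simplex. -/
structure HornRetractions where
  r : ∀ (n : ℕ) (i : Fin (n + 1)), 1 ≤ n → (SSet.toTop.obj Δ[n] ⟶ SSet.toTop.obj Λ[n, i])
  retraction : ∀ (n : ℕ) (i : Fin (n + 1)) (hn : 1 ≤ n),
    SSet.toTop.map (Λ[n, i].ι) ≫ r n i hn = 𝟙 (SSet.toTop.obj Λ[n, i])

/-- The fundamental `∞`-groupoid of a topological space `M`: the singular simplicial
set `Sing M` with the distinguished filler of a horn `h` given by the adjunct of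
`(adjunct of h) ∘ R(n,i)`. -/
noncomputable def ASingObj (R : HornRetractions) (M : TopCat.{0}) : AlgKan where
  carrier := TopCat.toSSet.obj M
  filler := fun n i hn h =>
    (sSetTopAdj.homEquiv Δ[n] M) (R.r n i hn ≫ (sSetTopAdj.homEquiv Λ[n, i] M).symm h)
  filler_spec := fun n i hn h => by
    rw [← Adjunction.homEquiv_naturality_left, ← Category.assoc, R.retraction,
      Category.id_comp, Equiv.apply_symm_apply]

/-- The fundamental `∞`-groupoid functor `ASing : Top ⥤ AlgKan` associated with the
chosen retractions. -/
noncomputable def ASing (R : HornRetractions) : TopCat.{0} ⥤ AlgKan where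
  obj M := ASingObj R M
  map {M N} f :=
    { map := TopCat.toSSet.map f
      preserves := fun n i hn h => by
        dsimp [ASingObj]
        rw [← Adjunction.homEquiv_naturality_right, Category.assoc]
        exact congrArg _ (congrArg (R.r n i hn ≫ ·)
          (Adjunction.homEquiv_naturality_right_symm _ _ _).symm) }
  map_id M := AlgKan.Hom.ext (TopCat.toSSet.map_id M)
  map_comp f g := AlgKan.Hom.ext (TopCat.toSSet.map_comp f g)

/-- The index type of all horns of an algebraic Kan complex. -/
structure HornIndex (X : AlgKan) : Type where
  n : ℕ
  i : Fin (n + 1)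
  hn : 1 ≤ n
  h : (Λ[n, i] : SSet) ⟶ X.carrier

/-- The reduced geometric realization of an algebraic Kan complex: the coequalizer,
over all horns `h : Λ[n,i] ⟶ X`, of the realization of the distinguished filler of
`h` against the realization of `h` precomposed with the retraction `R(n,i)`. -/
noncomputable def realReducedObj (R : HornRetractions) (X : AlgKan) : TopCat.{0} :=
  coequalizer
    (Sigma.desc fun k : HornIndex X => SSet.toTop.map (X.filler k.i k.hn k.h))
    (Sigma.desc fun k : HornIndex X => R.r k.n k.i k.hn ≫ SSet.toTop.map k.h)

/-- The reduced geometric realization functor `|·|_r : AlgKan ⥤ Top`. -/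
noncomputable def realReduced (R : HornRetractions) : AlgKan ⥤ TopCat.{0} where
  obj X := realReducedObj R X
  map {X Y} f := coequalizer.desc (SSet.toTop.map f.map ≫ coequalizer.π _ _) (by
    apply Sigma.hom_ext
    intro k
    simp only [colimit.ι_desc_assoc, Cofan.mk_ι_app]
    erw [← Functor.map_comp_assoc, f.preserves k.i k.hn k.h]
    have h2 := Limits.Sigma.ι (fun k : HornIndex Y => SSet.toTop.obj Δ[k.n])
        (⟨k.n, k.i, k.hn, k.h ≫ f.map⟩ : HornIndex Y) ≫=
      coequalizer.condition
        (Sigma.desc fun k : HornIndex Y => SSet.toTop.map (Y.filler k.i k.hn k.h))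
        (Sigma.desc fun k : HornIndex Y => R.r k.n k.i k.hn ≫ SSet.toTop.map k.h)
    simp only [colimit.ι_desc_assoc, Cofan.mk_ι_app] at h2
    simp [Functor.map_comp] at h2
    exact h2)
  map_id X := by
    dsimp only [realReducedObj]
    apply coequalizer.hom_ext
    simp [realReducedObj]
  map_comp f g := by
    apply coequalizer.hom_ext
    simp [realReducedObj]


namespace St17

instance : Adhesive SSet.{0} := inferInstanceAs (Adhesive (SimplexCategoryᵒᵖ ⥤ Type 0))

/-! ### Explicit coproducts of simplicial sets -/

@[simps]
def sigmaS {β : Type} (X : β → SSet.{0}) : SSet.{0} where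
  obj m := Σ b, (X b).obj m
  map φ := TypeCat.ofHom fun p => ⟨p.1, (X p.1).map φ p.2⟩
  map_id m := ConcreteCategory.hom_ext _ _ fun p => by cases p; simp
  map_comp φ ψ := ConcreteCategory.hom_ext _ _ fun p => by cases p; simp

@[simps]
def sigmaι {β : Type} (X : β → SSet.{0}) (b : β) : X b ⟶ sigmaS X where
  app _ := TypeCat.ofHom fun x => ⟨b, x⟩

@[simps]
def sigmaDesc {β : Type} {X : β → SSet.{0}} {W : SSet.{0}} (t : ∀ b, X b ⟶ W) :
    sigmaS X ⟶ W where
  app m := TypeCat.ofHom fun p => (t p.1).app m p.2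
  naturality m m' φ := by
    ext p
    exact ConcreteCategory.congr_hom ((t p.1).naturality φ) p.2

@[simp]
lemma sigmaι_desc {β : Type} {X : β → SSet.{0}} {W : SSet.{0}} (t : ∀ b, X b ⟶ W) (b : β) :
    sigmaι X b ≫ sigmaDesc t = t b := rfl

lemma sigma_hom_ext {β : Type} {X : β → SSet.{0}} {W : SSet.{0}} {u v : sigmaS X ⟶ W}
    (h : ∀ b, sigmaι X b ≫ u = sigmaι X b ≫ v) : u = v := by
  ext m ⟨b, x⟩
  exact ConcreteCategory.congr_hom (congrArg (fun (w : X b ⟶ W) => w.app m) (h b)) x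

/-! ### Monomorphism helpers -/

lemma mono_of_app_injective {X Y : SSet.{0}} (f : X ⟶ Y)
    (h : ∀ m, Function.Injective (f.app m)) : Mono f := by
  have : ∀ m, Mono (f.app m) := fun m => (CategoryTheory.mono_iff_injective _).2 (h m)
  exact NatTrans.mono_of_mono_app f

lemma app_injective_of_mono {X Y : SSet.{0}} (f : X ⟶ Y) [Mono f] (m) :
    Function.Injective (f.app m) :=
  (CategoryTheory.mono_iff_injective _).1 inferInstance

lemma hornInclusion_app_injective (n : ℕ) (j : Fin (n+1)) (m) :
    Function.Injective ((Λ[n, j].ι).app m) := fun _ _ h => Subtype.ext h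

instance (n : ℕ) (j : Fin (n+1)) : Mono (Λ[n, j].ι : (Λ[n, j] : SSet.{0}) ⟶ Δ[n]) :=
  mono_of_app_injective _ (hornInclusion_app_injective n j)

/-! ### An injective container: every simplicial set embeds into an object with
extensions along all levelwise-injective maps. -/

@[simps]
def IObj (X : SSet.{0}) : SSet.{0} where
  obj d := ∀ (c : SimplexCategoryᵒᵖ), (d ⟶ c) → Sum (X.obj c) PUnit
  map φ := TypeCat.ofHom fun f => fun c ψ => f c (φ ≫ ψ)
  map_id d := by ext f c ψ; exact congrArg (f c) (Category.id_comp ψ)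
  map_comp φ ψ := by ext f c χ; exact congrArg (f c) (Category.assoc φ ψ χ)

@[simps]
def toIObj (X : SSet.{0}) : X ⟶ IObj X where
  app d := TypeCat.ofHom fun x => fun c ψ => Sum.inl (X.map ψ x)
  naturality d d' φ := by
    ext x; funext c ψ
    exact congrArg Sum.inl (ConcreteCategory.congr_hom (X.map_comp φ ψ) x).symm

lemma toIObj_mono (X : SSet.{0}) : Mono (toIObj X) := by
  apply mono_of_app_injective
  intro m x y h
  have : Sum.inl (X.map (𝟙 m) x) = (Sum.inl (X.map (𝟙 m) y) : Sum (X.obj m) PUnit) :=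
    congrFun (congrFun h m) (𝟙 m)
  simpa using this

lemma IObj_extend {U V : SSet.{0}} (u : U ⟶ V) [Mono u] (X : SSet.{0}) (t : U ⟶ IObj X) :
    ∃ T : V ⟶ IObj X, u ≫ T = t := by
  classical
  let vf : ∀ c, V.obj c → Sum (X.obj c) PUnit := fun c y =>
    if h : ∃ x : U.obj c, u.app c x = y then (t.app c h.choose) c (𝟙 c) else Sum.inr ⟨⟩
  refine ⟨{ app := fun d => TypeCat.ofHom fun y => fun c ψ => vf c (V.map ψ y), naturality := ?_ }, ?_⟩
  · intro d d' φ
    ext y; funext c ψ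
    show vf c (V.map ψ (V.map φ y)) = vf c (V.map (φ ≫ ψ) y)
    rw [FunctorToTypes.map_comp_apply]
  · ext d x
    funext c ψ
    show vf c (V.map ψ (u.app d x)) = (t.app d x) c ψ
    have h1 : V.map ψ (u.app d x) = u.app c (U.map ψ x) :=
      (ConcreteCategory.congr_hom (u.naturality ψ) x).symm
    rw [h1]
    have hex : ∃ x' : U.obj c, u.app c x' = u.app c (U.map ψ x) := ⟨U.map ψ x, rfl⟩
    have hch : hex.choose = U.map ψ x := app_injective_of_mono u c hex.choose_spec
    show dite _ _ _ = _
    rw [dif_pos hex, hch]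
    have h2 := ConcreteCategory.congr_hom (t.naturality ψ) x
    have h3 := congrFun (congrFun h2 c) (𝟙 c)
    simp only [types_comp_apply, IObj] at h3
    exact h3.trans (congrArg ((t.app d) x c) (Category.comp_id ψ))

lemma innerAnodyne_mono {A B : SSet.{0}} (i : A ⟶ B) (hi : innerAnodyne i) : Mono i := by
  have hmono := toIObj_mono A
  let p : IObj A ⟶ ⊤_ SSet.{0} := terminal.from _
  have hp : rlp (fun _ _ f => innerHornInclusions f) p := by
    rintro X Y gq ⟨n, k, h0, hn⟩
    constructor
    intro f g sq
    obtain ⟨T, hT⟩ := IObj_extend (Λ[n, k].ι) A f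
    exact ⟨⟨⟨T, hT, Subsingleton.elim _ _⟩⟩⟩
  have : HasLiftingProperty i p := hi p hp
  have sq : CommSq (toIObj A) i p (terminal.from B) := ⟨Subsingleton.elim _ _⟩
  have : i ≫ sq.lift = toIObj A := sq.fac_left
  rw [← this] at hmono
  exact mono_of_mono i sq.lift

/-! ### Factorization of horn simplices through faces -/

lemma horn_simplex_factor {n : ℕ} {j : Fin (n+2)} : ∀ {m : SimplexCategoryᵒᵖ}
    (x : (Λ[n+1, j] : SSet).obj m),
    ∃ (k : Fin (n+2)) (hk : k ≠ j) (σ : m.unop ⟶ ⦋n⦌),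
      x = (Λ[n+1, j] : SSet).map σ.op (horn.face j k hk) := by
  apply Opposite.rec
  apply SimplexCategory.rec
  intro ml x
  obtain ⟨x1, hx⟩ := x
  obtain ⟨k, hkj, hk⟩ := (mem_horn_iff_notMem_range x1 j).1 hx
  obtain ⟨f', rfl⟩ := stdSimplex.objEquiv.symm.surjective x1
  have hfk : ∀ l, f'.toOrderHom l ≠ k := fun l hl => hk ⟨l, hl⟩
  refine ⟨k, hkj, SimplexCategory.factor_δ f' k, ?_⟩
  apply Subtype.ext
  apply stdSimplex.objEquiv.symm.injective.eq_iff.mpr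
  exact (SimplexCategory.factor_δ_spec f' k hfk).symm

/-! ### Sequential colimits of levelwise-injective maps -/

section Chain

variable (F : ℕ ⥤ SSet.{0}) (hF : ∀ n, Mono (F.map (homOfLE (Nat.le_add_right n 1))))

include hF

lemma mono_chain_map : ∀ (b a : ℕ) (h : a ≤ b), Mono (F.map (homOfLE h)) := by
  intro b
  induction b with
  | zero =>
      intro a h
      obtain rfl : a = 0 := Nat.le_zero.1 h
      rw [show homOfLE h = 𝟙 (0:ℕ) from Subsingleton.elim _ _, F.map_id]
      infer_instance
  | succ k ih =>
      intro a h
      by_cases hak : a ≤ k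
      · rw [show homOfLE h = homOfLE hak ≫ homOfLE (Nat.le_add_right k 1) from
          Subsingleton.elim _ _, F.map_comp]
        have h1 := ih a hak
        have h2 := hF k
        exact mono_comp _ _
      · obtain rfl : a = k+1 := by omega
        rw [show homOfLE h = 𝟙 (k+1:ℕ) from Subsingleton.elim _ _, F.map_id]
        infer_instance

lemma leg_app_injective (N : ℕ) (m : SimplexCategoryᵒᵖ) :
    Function.Injective ((colimit.ι F N).app m) := by
  intro x y hxy
  have hc : IsColimit (((evaluation SimplexCategoryᵒᵖ (Type 0)).obj m).mapCocone
      (colimit.cocone F)) :=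
    isColimitOfPreserves _ (colimit.isColimit F)
  obtain ⟨k, φ, ψ, hk⟩ :=
    (Types.FilteredColimit.isColimit_eq_iff
      (F ⋙ (evaluation SimplexCategoryᵒᵖ (Type 0)).obj m) hc (xi := x) (xj := y)).1 hxy
  have hφψ : φ = ψ := Subsingleton.elim _ _
  subst hφψ
  haveI : Mono (F.map φ) := by
    rw [show φ = homOfLE (leOfHom φ) from Subsingleton.elim _ _]
    exact mono_chain_map F hF k N (leOfHom φ)
  exact app_injective_of_mono (F.map φ) m hk

lemma leg_mono (N : ℕ) : Mono (colimit.ι F N) :=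
  mono_of_app_injective _ (leg_app_injective F hF N)

lemma horn_factors_through_stage {n : ℕ} {j : Fin (n+2)} (f : (Λ[n+1, j] : SSet) ⟶ colimit F) :
    ∃ (N : ℕ) (f' : (Λ[n+1, j] : SSet) ⟶ F.obj N), f' ≫ colimit.ι F N = f := by
  classical
  have hc : IsColimit (((evaluation SimplexCategoryᵒᵖ (Type 0)).obj
      (Opposite.op ⦋n⦌)).mapCocone (colimit.cocone F)) :=
    isColimitOfPreserves _ (colimit.isColimit F)
  have hfc : ∀ (k : Fin (n+2)) (_ : k ≠ j), ∃ (Nk : ℕ)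
      (yk : (F.obj Nk).obj (Opposite.op ⦋n⦌)),
      (colimit.ι F Nk).app _ yk = f.app _ (horn.face j k ‹_›) := by
    intro k hk
    obtain ⟨Nk, y, hy⟩ := Types.jointly_surjective
      (F ⋙ (evaluation SimplexCategoryᵒᵖ (Type 0)).obj (Opposite.op ⦋n⦌)) hc
      (f.app _ (horn.face j k hk))
    exact ⟨Nk, y, hy⟩
  choose Nk yk hyk using hfc
  set N : ℕ := Finset.univ.sup (fun k : Fin (n+2) => if h : k = j then 0 else Nk k h) with hN
  have hNk : ∀ k hk, Nk k hk ≤ N := by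
    intro k hk
    have := Finset.le_sup (f := fun k : Fin (n+2) => if h : k = j then 0 else Nk k h)
      (Finset.mem_univ k)
    rwa [dif_neg hk] at this
  set y' : ∀ (k : Fin (n+2)) (_ : k ≠ j), (F.obj N).obj (Opposite.op ⦋n⦌) :=
    fun k hk => (F.map (homOfLE (hNk k hk))).app _ (yk k hk) with hy'def
  have hy' : ∀ k hk, (colimit.ι F N).app _ (y' k hk) = f.app _ (horn.face j k hk) := by
    intro k hk
    have hw := colimit.w F (homOfLE (hNk k hk))
    exact (ConcreteCategory.congr_hom (NatTrans.congr_app hw (Opposite.op ⦋n⦌)) (yk k hk)).trans (hyk k hk)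
  set app : ∀ (m : SimplexCategoryᵒᵖ), (Λ[n+1, j] : SSet).obj m → (F.obj N).obj m := fun m x =>
    (F.obj N).map (horn_simplex_factor x).choose_spec.choose_spec.choose.op
      (y' (horn_simplex_factor x).choose (horn_simplex_factor x).choose_spec.choose)
    with happ
  have hkey : ∀ m (x : (Λ[n+1,j] : SSet).obj m), (colimit.ι F N).app m (app m x) = f.app m x := by
    intro m x
    have h := (horn_simplex_factor x).choose_spec.choose_spec.choose_spec
    set k := (horn_simplex_factor x).choose with hkdef
    set hk := (horn_simplex_factor x).choose_spec.choose with hhkdef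
    set σ := (horn_simplex_factor x).choose_spec.choose_spec.choose with hσdef
    have h1 := ConcreteCategory.congr_hom ((colimit.ι F N).naturality σ.op) (y' k hk)
    have h2 := ConcreteCategory.congr_hom (f.naturality σ.op) (horn.face j k hk)
    show (colimit.ι F N).app m ((F.obj N).map σ.op (y' k hk)) = f.app m x
    rw [show ((colimit.ι F N).app m ((F.obj N).map σ.op (y' k hk)))
        = (colimit F).map σ.op ((colimit.ι F N).app _ (y' k hk)) from h1]
    rw [hy' k hk]
    rw [show (colimit F).map σ.op (f.app _ (horn.face j k hk))
        = f.app m ((Λ[n+1,j] : SSet).map σ.op (horn.face j k hk)) from h2.symm]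
    rw [← h]
  refine ⟨N, { app := fun m => TypeCat.ofHom (app m), naturality := ?_ }, ?_⟩
  · intro m m' φ
    ext x
    apply leg_app_injective F hF N m'
    show (colimit.ι F N).app m' (app m' ((Λ[n+1,j] : SSet).map φ x))
      = (colimit.ι F N).app m' ((F.obj N).map φ (app m x))
    rw [hkey]
    have h1 := ConcreteCategory.congr_hom ((colimit.ι F N).naturality φ) (app m x)
    rw [show ((colimit.ι F N).app m' ((F.obj N).map φ (app m x)))
        = (colimit F).map φ ((colimit.ι F N).app m (app m x)) from h1]
    rw [hkey]
    have h2 := ConcreteCategory.congr_hom (f.naturality φ) x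
    simp only [types_comp_apply] at h2
    exact h2
  · ext m x
    exact hkey m x

end Chain

/-! ### The core construction: attaching free inner-horn fillers -/

section Core

variable {A B : SSet.{0}} (i : A ⟶ B) {Y : AlgQ} (gf : A ⟶ Y.carrier)

/-- A "fresh" inner horn of `X` relative to `f : W ⟶ X`: one that does not factor
through `f`. -/
structure Fresh {W X : SSet.{0}} (f : W ⟶ X) : Type where
  n : ℕ
  j : Fin (n+2)
  h0 : 0 < j.val
  hn : j.val < n + 1
  h : (Λ[n+1, j] : SSet) ⟶ X
  fresh : ¬ ∃ u : (Λ[n+1, j] : SSet) ⟶ W, u ≫ f = h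

variable {W X : SSet.{0}}

def hornFam (f : W ⟶ X) : Fresh f → SSet.{0} := fun q => Λ[q.n+1, q.j]

def cellFam (f : W ⟶ X) : Fresh f → SSet.{0} := fun q => Δ[q.n+1]

attribute [reducible] hornFam cellFam

def attach (f : W ⟶ X) : sigmaS (hornFam f) ⟶ X := sigmaDesc fun q => q.h

def sumIncl (f : W ⟶ X) : sigmaS (hornFam f) ⟶ sigmaS (cellFam f) :=
  sigmaDesc fun q => Λ[q.n+1, q.j].ι ≫ sigmaι (cellFam f) q

noncomputable def stepX (f : W ⟶ X) : SSet.{0} := pushout (attach f) (sumIncl f)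

attribute [reducible] stepX

noncomputable def stepMap (f : W ⟶ X) : X ⟶ stepX f := pushout.inl _ _

noncomputable def cellIn (f : W ⟶ X) (q : Fresh f) : Δ[q.n+1] ⟶ stepX f :=
  sigmaι (cellFam f) q ≫ pushout.inr _ _

lemma cell_spec (f : W ⟶ X) (q : Fresh f) :
    Λ[q.n+1, q.j].ι ≫ cellIn f q = q.h ≫ stepMap f := by
  rw [cellIn, ← Category.assoc,
    show Λ[q.n+1, q.j].ι ≫ sigmaι (cellFam f) q
      = sigmaι (hornFam f) q ≫ sumIncl f from rfl,
    Category.assoc, ← pushout.condition, ← Category.assoc,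
    show sigmaι (hornFam f) q ≫ attach f = q.h from rfl]
  rfl

lemma mono_sumIncl (f : W ⟶ X) : Mono (sumIncl f) := by
  apply mono_of_app_injective
  intro m p p' hpp
  obtain ⟨q, x⟩ := p
  obtain ⟨q', x'⟩ := p'
  have hpp' : (⟨q, (Λ[q.n+1, q.j].ι).app m x⟩ : Σ b, (cellFam f b).obj m)
      = ⟨q', (Λ[q'.n+1, q'.j].ι).app m x'⟩ := hpp
  obtain ⟨h1, h2⟩ := _root_.Sigma.ext_iff.mp hpp'
  dsimp only at h1 h2
  subst h1
  have h3 := eq_of_heq h2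
  have h4 : x = x' := hornInclusion_app_injective (q.n+1) q.j m h3
  rw [h4]

lemma mono_stepMap (f : W ⟶ X) : Mono (stepMap f) := by
  haveI := mono_sumIncl f
  exact Adhesive.mono_of_isPushout_of_mono_right (IsPushout.of_hasPushout (attach f) (sumIncl f))

/-! ### The tower of attachments -/

noncomputable def stage : ℕ → Σ' (W : SSet.{0}) (X : SSet.{0}), W ⟶ X :=
  Nat.rec ⟨Y.carrier, pushout gf i, pushout.inl gf i⟩
    (fun _ s => ⟨s.2.1, stepX s.2.2, stepMap s.2.2⟩)

noncomputable def obj (n : ℕ) : SSet.{0} := (stage i gf n).2.1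

attribute [reducible] stage obj

noncomputable def nextMap (n : ℕ) : obj i gf n ⟶ obj i gf (n+1) := (stage i gf (n+1)).2.2

noncomputable def chain : ℕ ⥤ SSet.{0} := Functor.ofSequence (nextMap i gf)

noncomputable def P0 : SSet.{0} := colimit (chain i gf)

attribute [reducible] P0

noncomputable def ιs (n : ℕ) : obj i gf n ⟶ P0 i gf := colimit.ι (chain i gf) n

noncomputable def ιY : Y.carrier ⟶ P0 i gf := (stage i gf 0).2.2 ≫ ιs i gf 0

lemma chain_succ (n : ℕ) :
    (chain i gf).map (homOfLE (Nat.le_add_right n 1)) = nextMap i gf n :=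
  Functor.ofSequence_map_homOfLE_succ _ n

lemma chain_mono (n : ℕ) : Mono ((chain i gf).map (homOfLE (Nat.le_add_right n 1))) := by
  rw [chain_succ]
  exact mono_stepMap _

lemma ιs_w (n : ℕ) : nextMap i gf n ≫ ιs i gf (n+1) = ιs i gf n := by
  rw [← chain_succ]
  exact colimit.w _ _

lemma ιs_app_injective (n : ℕ) (m : SimplexCategoryᵒᵖ) :
    Function.Injective ((ιs i gf n).app m) :=
  leg_app_injective _ (chain_mono i gf) n m

lemma ιs_mono (n : ℕ) : Mono (ιs i gf n) := leg_mono _ (chain_mono i gf) n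

lemma horn_to_P0 {n : ℕ} {j : Fin (n+2)} (h : (Λ[n+1,j] : SSet) ⟶ P0 i gf) :
    ∃ (N : ℕ) (h' : (Λ[n+1,j] : SSet) ⟶ obj i gf N), h' ≫ ιs i gf N = h :=
  horn_factors_through_stage _ (chain_mono i gf) h

lemma ιY_mono [Mono i] : Mono (ιY i gf) := by
  haveI h1 : Mono (pushout.inl gf i) :=
    Adhesive.mono_of_isPushout_of_mono_right (IsPushout.of_hasPushout gf i)
  haveI h2 := ιs_mono i gf 0
  show Mono ((pushout.inl gf i) ≫ ιs i gf 0)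
  exact mono_comp _ _

noncomputable def trans (a b : ℕ) (h : a ≤ b) : obj i gf a ⟶ obj i gf b :=
  (chain i gf).map (homOfLE h)

lemma trans_w (a b : ℕ) (h : a ≤ b) : trans i gf a b h ≫ ιs i gf b = ιs i gf a :=
  colimit.w _ _

lemma trans_succ (a b : ℕ) (h : a ≤ b + 1) (hab : a ≤ b) :
    trans i gf a (b+1) h = trans i gf a b hab ≫ nextMap i gf b := by
  rw [trans, trans, show homOfLE h = homOfLE hab ≫ homOfLE (Nat.le_add_right b 1) from
    Subsingleton.elim _ _, Functor.map_comp, chain_succ]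
  rfl

lemma trans_refl (a : ℕ) (h : a ≤ a) : trans i gf a a h = 𝟙 _ := by
  rw [trans, show homOfLE h = 𝟙 a from Subsingleton.elim _ _]
  exact (chain i gf).map_id a

lemma descend0 {n : ℕ} {j : Fin (n+2)} (h' : (Λ[n+1,j] : SSet) ⟶ obj i gf 0)
    (u : (Λ[n+1,j] : SSet) ⟶ Y.carrier) (hu : u ≫ (stage i gf 0).2.2 = h') :
    u ≫ ιY i gf = h' ≫ ιs i gf 0 := by
  rw [ιY, ← Category.assoc, hu]

lemma descendS {n : ℕ} {j : Fin (n+2)} (k : ℕ) (h' : (Λ[n+1,j] : SSet) ⟶ obj i gf (k+1))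
    (u : (Λ[n+1,j] : SSet) ⟶ obj i gf k) (hu : u ≫ (stage i gf (k+1)).2.2 = h') :
    u ≫ ιs i gf k = h' ≫ ιs i gf (k+1) := by
  rw [← hu, Category.assoc]
  congr 1
  exact (ιs_w i gf k).symm

lemma exists_fresh {n : ℕ} {j : Fin (n+2)} (h : (Λ[n+1,j] : SSet) ⟶ P0 i gf)
    (hY : ¬ ∃ u : (Λ[n+1,j] : SSet) ⟶ Y.carrier, u ≫ ιY i gf = h) :
    ∃ (m : ℕ) (h' : (Λ[n+1,j] : SSet) ⟶ obj i gf m),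
      (¬ ∃ u, u ≫ (stage i gf m).2.2 = h') ∧ h' ≫ ιs i gf m = h := by
  classical
  have hex : ∃ N : ℕ, ∃ h' : (Λ[n+1,j] : SSet) ⟶ obj i gf N, h' ≫ ιs i gf N = h := by
    obtain ⟨N, h', hh⟩ := horn_to_P0 i gf h
    exact ⟨N, h', hh⟩
  have hmin : ∀ k, k < Nat.find hex → ¬∃ h'' : (Λ[n+1,j] : SSet) ⟶ obj i gf k,
      h'' ≫ ιs i gf k = h := fun k hk => Nat.find_min hex hk
  suffices H : ∀ (M : ℕ), (∀ k, k < M → ¬∃ h'' : (Λ[n+1,j] : SSet) ⟶ obj i gf k,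
      h'' ≫ ιs i gf k = h) → ∀ (h' : (Λ[n+1,j] : SSet) ⟶ obj i gf M), h' ≫ ιs i gf M = h →
      ¬∃ u, u ≫ (stage i gf M).2.2 = h' by
    obtain ⟨h', hh'⟩ := Nat.find_spec hex
    exact ⟨Nat.find hex, h', H _ hmin h' hh', hh'⟩
  intro M hmin' h' hh'
  rintro ⟨u, hu⟩
  cases M with
  | zero => exact hY ⟨u, (descend0 i gf h' u hu).trans hh'⟩
  | succ k =>
      exact hmin' k (Nat.lt_succ_self k) ⟨u, (descendS i gf k h' u hu).trans hh'⟩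

lemma fresh_unique_m {n : ℕ} {j : Fin (n+2)} {m m' : ℕ}
    (h1 : (Λ[n+1,j] : SSet) ⟶ obj i gf m) (h2 : (Λ[n+1,j] : SSet) ⟶ obj i gf m')
    (f2 : ¬∃ u, u ≫ (stage i gf m').2.2 = h2)
    (e : h1 ≫ ιs i gf m = h2 ≫ ιs i gf m') (hle : m ≤ m') : m = m' := by
  by_contra hne
  have hlt : m < m' := by omega
  obtain ⟨k, rfl⟩ : ∃ k, m' = k+1 := ⟨m' - 1, by omega⟩
  haveI := ιs_mono i gf (k+1)
  have h21 : h1 ≫ trans i gf m (k+1) (by omega) = h2 := by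
    apply (cancel_mono (ιs i gf (k+1))).1
    rw [Category.assoc, trans_w, e]
  refine f2 ⟨h1 ≫ trans i gf m k (by omega), ?_⟩
  rw [← h21, trans_succ i gf m k (by omega) (by omega), ← Category.assoc]
  rfl

lemma fresh_unique {n : ℕ} {j : Fin (n+2)} {m m' : ℕ}
    (h1 : (Λ[n+1,j] : SSet) ⟶ obj i gf m) (h2 : (Λ[n+1,j] : SSet) ⟶ obj i gf m')
    (f1 : ¬∃ u, u ≫ (stage i gf m).2.2 = h1)
    (f2 : ¬∃ u, u ≫ (stage i gf m').2.2 = h2)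
    (e : h1 ≫ ιs i gf m = h2 ≫ ιs i gf m') : m = m' := by
  rcases Nat.le_total m m' with hle | hle
  · exact fresh_unique_m i gf h1 h2 f2 e hle
  · exact (fresh_unique_m i gf h2 h1 f1 e.symm hle).symm

lemma ι_cancel {n : ℕ} {j : Fin (n+2)} {m : ℕ} (h1 h2 : (Λ[n+1,j] : SSet) ⟶ obj i gf m)
    (e : h1 ≫ ιs i gf m = h2 ≫ ιs i gf m) : h1 = h2 := by
  haveI := ιs_mono i gf m
  exact (cancel_mono (ιs i gf m)).1 e

/-! ### The filler structure on the colimit -/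

open Classical in
noncomputable def fillerAux (m : ℕ) (k : Fin (m+2)) (h0 : 0 < k.val) (hn : k.val < m+1)
    (h : (Λ[m+1, k] : SSet) ⟶ P0 i gf) : Δ[m+1] ⟶ P0 i gf :=
  if hc : ∃ u : (Λ[m+1,k] : SSet) ⟶ Y.carrier, u ≫ ιY i gf = h then
    Y.filler k h0 hn hc.choose ≫ ιY i gf
  else
    cellIn (stage i gf (exists_fresh i gf h hc).choose).2.2
      ⟨m, k, h0, hn, (exists_fresh i gf h hc).choose_spec.choose,
        (exists_fresh i gf h hc).choose_spec.choose_spec.1⟩ ≫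
      ιs i gf ((exists_fresh i gf h hc).choose + 1)

lemma fillerAux_spec (m : ℕ) (k : Fin (m+2)) (h0 : 0 < k.val) (hn : k.val < m+1)
    (h : (Λ[m+1, k] : SSet) ⟶ P0 i gf) :
    Λ[m+1, k].ι ≫ fillerAux i gf m k h0 hn h = h := by
  rw [fillerAux]
  split_ifs with hc
  · rw [← Category.assoc, Y.filler_spec, hc.choose_spec]
  · have e := cell_spec (stage i gf (exists_fresh i gf h hc).choose).2.2
      ⟨m, k, h0, hn, (exists_fresh i gf h hc).choose_spec.choose,
        (exists_fresh i gf h hc).choose_spec.choose_spec.1⟩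
    dsimp only at e
    rw [← Category.assoc, e, Category.assoc,
      show stepMap (stage i gf (exists_fresh i gf h hc).choose).2.2 ≫
          ιs i gf ((exists_fresh i gf h hc).choose + 1)
        = nextMap i gf (exists_fresh i gf h hc).choose ≫
          ιs i gf ((exists_fresh i gf h hc).choose + 1) from rfl,
      ιs_w]
    exact (exists_fresh i gf h hc).choose_spec.choose_spec.2

noncomputable def Pobj : AlgQ where
  carrier := P0 i gf
  filler := fun N k h0 hn h =>
    match N, k, h0, hn, h with
    | 0, _, _, hn, _ => absurd hn (Nat.not_lt_zero _)
    | m+1, k, h0, hn, h => fillerAux i gf m k h0 hn h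
  filler_spec := fun N k h0 hn h =>
    match N, k, h0, hn, h with
    | 0, _, _, hn, _ => absurd hn (Nat.not_lt_zero _)
    | m+1, k, h0, hn, h => fillerAux_spec i gf m k h0 hn h

attribute [reducible] Pobj

lemma filler_caseY [Mono i] (m : ℕ) (k : Fin (m+2)) (h0 : 0 < k.val) (hn : k.val < m+1)
    (u : (Λ[m+1,k] : SSet) ⟶ Y.carrier) :
    fillerAux i gf m k h0 hn (u ≫ ιY i gf) = Y.filler k h0 hn u ≫ ιY i gf := by
  have hc : ∃ v : (Λ[m+1,k] : SSet) ⟶ Y.carrier, v ≫ ιY i gf = u ≫ ιY i gf := ⟨u, rfl⟩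
  rw [fillerAux, dif_pos hc]
  haveI := ιY_mono i gf
  have hch : hc.choose = u := (cancel_mono (ιY i gf)).1 hc.choose_spec
  rw [hch]

lemma not_caseY_of_fresh [Mono i] (N : ℕ) (q : Fresh (stage i gf N).2.2) :
    ¬ ∃ u : (Λ[q.n+1,q.j] : SSet) ⟶ Y.carrier, u ≫ ιY i gf = q.h ≫ ιs i gf N := by
  rintro ⟨u, hu⟩
  have h1 : (u ≫ (stage i gf 0).2.2 ≫ trans i gf 0 N (Nat.zero_le N)) ≫ ιs i gf N
      = q.h ≫ ιs i gf N := by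
    rw [← hu, ιY]
    simp only [Category.assoc]
    rw [trans_w]
  have h2 : u ≫ (stage i gf 0).2.2 ≫ trans i gf 0 N (Nat.zero_le N) = q.h :=
    ι_cancel i gf _ _ h1
  cases N with
  | zero =>
      refine q.fresh ⟨u, ι_cancel i gf _ _ ?_⟩
      rw [Category.assoc]
      exact hu
  | succ k =>
      refine q.fresh ⟨u ≫ (stage i gf 0).2.2 ≫ trans i gf 0 k (Nat.zero_le k),
        ι_cancel i gf _ _ ?_⟩
      show (_ ≫ _) ≫ ιs i gf (k+1) = q.h ≫ ιs i gf (k+1)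
      simp only [Category.assoc]
      rw [show (stage i gf (k+1)).2.2 ≫ ιs i gf (k+1)
          = nextMap i gf k ≫ ιs i gf (k+1) from rfl, ιs_w, trans_w,
        show (stage i gf 0).2.2 ≫ ιs i gf 0 = ιY i gf from rfl]
      exact hu

lemma cell_eq_cell {n : ℕ} {j : Fin (n+2)} {M N : ℕ}
    (h1 : (Λ[n+1,j] : SSet) ⟶ obj i gf M) (h2 : (Λ[n+1,j] : SSet) ⟶ obj i gf N)
    {h0 : 0 < j.val} {hn : j.val < n+1} {h0' : 0 < j.val} {hn' : j.val < n+1}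
    (f1 : ¬∃ u, u ≫ (stage i gf M).2.2 = h1) (f2 : ¬∃ u, u ≫ (stage i gf N).2.2 = h2)
    (e : h1 ≫ ιs i gf M = h2 ≫ ιs i gf N) :
    cellIn (stage i gf M).2.2 ⟨n, j, h0, hn, h1, f1⟩ ≫ ιs i gf (M+1)
      = cellIn (stage i gf N).2.2 ⟨n, j, h0', hn', h2, f2⟩ ≫ ιs i gf (N+1) := by
  have hMN : M = N := fresh_unique i gf h1 h2 f1 f2 e
  subst hMN
  have hh : h1 = h2 := ι_cancel i gf _ _ e
  subst hh
  rfl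

lemma filler_eq_cell [Mono i] (N : ℕ) (q : Fresh (stage i gf N).2.2) :
    fillerAux i gf q.n q.j q.h0 q.hn (q.h ≫ ιs i gf N)
      = cellIn (stage i gf N).2.2 q ≫ ιs i gf (N+1) := by
  obtain ⟨qn, qj, qh0, qhn, qh, qf⟩ := q
  dsimp only at *
  have hc := not_caseY_of_fresh i gf N ⟨qn, qj, qh0, qhn, qh, qf⟩
  dsimp only at hc
  rw [fillerAux, dif_neg hc]
  exact cell_eq_cell i gf _ qh
    (exists_fresh i gf (qh ≫ ιs i gf N) hc).choose_spec.choose_spec.1 qf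
    (exists_fresh i gf (qh ≫ ιs i gf N) hc).choose_spec.choose_spec.2

noncomputable def rHom [Mono i] : Y ⟶ Pobj i gf where
  map := ιY i gf
  preserves := by
    intro N k h0 hn hh
    cases N with
    | zero => exact absurd hn (Nat.not_lt_zero _)
    | succ m =>
        show Y.filler k h0 hn hh ≫ ιY i gf = fillerAux i gf m k h0 hn (hh ≫ ιY i gf)
        exact (filler_caseY i gf m k h0 hn hh).symm

noncomputable def inrB : B ⟶ P0 i gf := pushout.inr gf i ≫ ιs i gf 0

lemma i_inrB : i ≫ inrB i gf = gf ≫ ιY i gf := by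
  rw [inrB, ιY, ← Category.assoc, ← Category.assoc,
    show (stage i gf 0).2.2 = pushout.inl gf i from rfl, ← pushout.condition]

section UP

variable (Z : AlgQ) (v : Y ⟶ Z) (b : B ⟶ Z.carrier) (hvb : gf ≫ v.map = i ≫ b)

noncomputable def legStep (n : ℕ) (ln : obj i gf n ⟶ Z.carrier) :
    obj i gf (n+1) ⟶ Z.carrier :=
  pushout.desc ln
    (sigmaDesc fun q => Z.filler q.j q.h0 q.hn (q.h ≫ ln))
    (sigma_hom_ext fun q =>
      show q.h ≫ ln = Λ[q.n+1, q.j].ι ≫ Z.filler q.j q.h0 q.hn (q.h ≫ ln) from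
        (Z.filler_spec q.j q.h0 q.hn (q.h ≫ ln)).symm)

noncomputable def leg : ∀ n : ℕ, (obj i gf n ⟶ Z.carrier) :=
  Nat.rec (pushout.desc v.map b hvb) (fun n ln => legStep i gf Z n ln)

lemma leg_compat (n : ℕ) :
    nextMap i gf n ≫ leg i gf Z v b hvb (n+1) = leg i gf Z v b hvb n := by
  show pushout.inl _ _ ≫ pushout.desc _ _ _ = _
  exact pushout.inl_desc _ _ _

lemma cell_leg (n : ℕ) (q : Fresh (stage i gf n).2.2) :
    cellIn (stage i gf n).2.2 q ≫ leg i gf Z v b hvb (n+1)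
      = Z.filler q.j q.h0 q.hn (q.h ≫ leg i gf Z v b hvb n) := by
  show (sigmaι (cellFam (stage i gf n).2.2) q ≫ pushout.inr _ _) ≫ pushout.desc _ _ _ = _
  rw [Category.assoc, pushout.inr_desc]
  rfl

noncomputable def descMap : P0 i gf ⟶ Z.carrier :=
  colimit.desc (chain i gf)
    ⟨Z.carrier, NatTrans.ofSequence (F := chain i gf) (G := (Functor.const ℕ).obj Z.carrier)
      (fun n => leg i gf Z v b hvb n)
      (fun n => by
        rw [chain_succ]
        exact (leg_compat i gf Z v b hvb n).trans (Category.comp_id _).symm)⟩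

lemma ιs_descMap (n : ℕ) :
    ιs i gf n ≫ descMap i gf Z v b hvb = leg i gf Z v b hvb n :=
  colimit.ι_desc _ _

lemma ιY_descMap : ιY i gf ≫ descMap i gf Z v b hvb = v.map := by
  rw [ιY, Category.assoc, ιs_descMap]
  exact pushout.inl_desc _ _ _

lemma inrB_descMap : inrB i gf ≫ descMap i gf Z v b hvb = b := by
  rw [inrB, Category.assoc, ιs_descMap]
  exact pushout.inr_desc _ _ _

noncomputable def tHom [Mono i] : Pobj i gf ⟶ Z where
  map := descMap i gf Z v b hvb
  preserves := by
    intro N k h0 hn h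
    cases N with
    | zero => exact absurd hn (Nat.not_lt_zero _)
    | succ m =>
        show fillerAux i gf m k h0 hn h ≫ descMap i gf Z v b hvb
          = Z.filler k h0 hn (h ≫ descMap i gf Z v b hvb)
        rw [fillerAux]
        split_ifs with hc
        · rw [Category.assoc, ιY_descMap, v.preserves]
          congr 1
          conv_rhs => rw [← hc.choose_spec]
          rw [Category.assoc, ιY_descMap]
        · rw [Category.assoc, ιs_descMap]
          have e := cell_leg i gf Z v b hvb (exists_fresh i gf h hc).choose
            ⟨m, k, h0, hn, (exists_fresh i gf h hc).choose_spec.choose,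
             (exists_fresh i gf h hc).choose_spec.choose_spec.1⟩
          dsimp only at e
          rw [e]
          congr 1
          conv_rhs => rw [← (exists_fresh i gf h hc).choose_spec.choose_spec.2]
          rw [Category.assoc, ιs_descMap]

lemma desc_unique [Mono i] (t' : Pobj i gf ⟶ Z)
    (hv : ιY i gf ≫ t'.map = v.map) (hb : inrB i gf ≫ t'.map = b) :
    t'.map = descMap i gf Z v b hvb := by
  have key : ∀ n, ιs i gf n ≫ t'.map = leg i gf Z v b hvb n := by
    intro n
    induction n with
    | zero =>
        apply pushout.hom_ext
        · rw [← Category.assoc,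
            show pushout.inl gf i ≫ ιs i gf 0 = ιY i gf from rfl, hv,
            show pushout.inl gf i ≫ leg i gf Z v b hvb 0 = v.map from pushout.inl_desc _ _ _]
        · rw [← Category.assoc,
            show pushout.inr gf i ≫ ιs i gf 0 = inrB i gf from rfl, hb,
            show pushout.inr gf i ≫ leg i gf Z v b hvb 0 = b from pushout.inr_desc _ _ _]
    | succ n ih =>
        refine pushout.hom_ext ?_ ?_
        · show pushout.inl (attach (stage i gf n).2.2) (sumIncl (stage i gf n).2.2)
              ≫ ιs i gf (n+1) ≫ t'.map
            = pushout.inl (attach (stage i gf n).2.2) (sumIncl (stage i gf n).2.2)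
              ≫ leg i gf Z v b hvb (n+1)
          rw [← Category.assoc,
            show pushout.inl (attach (stage i gf n).2.2) (sumIncl (stage i gf n).2.2)
                ≫ ιs i gf (n+1) = ιs i gf n from ιs_w i gf n, ih,
            show pushout.inl (attach (stage i gf n).2.2) (sumIncl (stage i gf n).2.2)
                ≫ leg i gf Z v b hvb (n+1) = leg i gf Z v b hvb n
              from leg_compat i gf Z v b hvb n]
        · refine sigma_hom_ext fun q => ?_
          show sigmaι (cellFam (stage i gf n).2.2) q
              ≫ pushout.inr (attach (stage i gf n).2.2) (sumIncl (stage i gf n).2.2)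
              ≫ ιs i gf (n+1) ≫ t'.map
            = sigmaι (cellFam (stage i gf n).2.2) q
              ≫ pushout.inr (attach (stage i gf n).2.2) (sumIncl (stage i gf n).2.2)
              ≫ leg i gf Z v b hvb (n+1)
          simp only [← Category.assoc]
          rw [show sigmaι (cellFam (stage i gf n).2.2) q
              ≫ pushout.inr (attach (stage i gf n).2.2) (sumIncl (stage i gf n).2.2)
              = cellIn (stage i gf n).2.2 q from rfl]
          rw [show cellIn (stage i gf n).2.2 q ≫ ιs i gf (n+1)
              = fillerAux i gf q.n q.j q.h0 q.hn (q.h ≫ ιs i gf n)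
              from (filler_eq_cell i gf n q).symm]
          rw [show fillerAux i gf q.n q.j q.h0 q.hn (q.h ≫ ιs i gf n) ≫ t'.map
              = Z.filler q.j q.h0 q.hn ((q.h ≫ ιs i gf n) ≫ t'.map)
              from t'.preserves q.j q.h0 q.hn (q.h ≫ ιs i gf n)]
          rw [show cellIn (stage i gf n).2.2 q ≫ leg i gf Z v b hvb (n+1)
              = Z.filler q.j q.h0 q.hn (q.h ≫ leg i gf Z v b hvb n)
              from cell_leg i gf Z v b hvb n q]
          rw [Category.assoc, ih]
  apply colimit.hom_ext
  intro n
  rw [descMap, colimit.ι_desc]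
  exact key n

end UP

section Lift

variable {E F : SSet.{0}} (p : E ⟶ F)
  (hp : rlp (fun _ _ f => innerHornInclusions f) p) (bot : P0 i gf ⟶ F)

noncomputable def liftStep (n : ℕ) (ln : obj i gf n ⟶ E) (hln : ln ≫ p = ιs i gf n ≫ bot) :
    Σ' (l : obj i gf (n+1) ⟶ E),
      l ≫ p = ιs i gf (n+1) ≫ bot ∧
      pushout.inl (attach (stage i gf n).2.2) (sumIncl (stage i gf n).2.2) ≫ l = ln := by
  have hw : ∀ q : Fresh (stage i gf n).2.2,
      (q.h ≫ ln) ≫ p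
        = Λ[q.n+1, q.j].ι ≫ cellIn (stage i gf n).2.2 q ≫ ιs i gf (n+1) ≫ bot := by
    intro q
    calc (q.h ≫ ln) ≫ p = q.h ≫ ιs i gf n ≫ bot := by rw [Category.assoc, hln]
    _ = q.h ≫ (stepMap (stage i gf n).2.2 ≫ ιs i gf (n+1)) ≫ bot := by
        rw [show stepMap (stage i gf n).2.2 ≫ ιs i gf (n+1) = ιs i gf n from ιs_w i gf n]
    _ = (Λ[q.n+1, q.j].ι ≫ cellIn (stage i gf n).2.2 q) ≫ ιs i gf (n+1) ≫ bot := by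
        rw [cell_spec]
        simp only [Category.assoc]
    _ = Λ[q.n+1, q.j].ι ≫ cellIn (stage i gf n).2.2 q ≫ ιs i gf (n+1) ≫ bot := by
        simp only [Category.assoc]
  have sqq : ∀ q : Fresh (stage i gf n).2.2,
      CommSq (q.h ≫ ln) (Λ[q.n+1, q.j].ι) p
        (cellIn (stage i gf n).2.2 q ≫ ιs i gf (n+1) ≫ bot) := fun q => ⟨hw q⟩
  let lf : ∀ q, (sqq q).LiftStruct := fun q =>
    ((hp _ (innerHornInclusions.mk (q.n+1) q.j q.h0 q.hn)).sq_hasLift (sqq q)).exists_lift.some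
  refine ⟨pushout.desc ln (sigmaDesc fun q => (lf q).l) (sigma_hom_ext fun q =>
    show q.h ≫ ln = Λ[q.n+1, q.j].ι ≫ (lf q).l from ((lf q).fac_left).symm),
    ?_, ?_⟩
  · refine pushout.hom_ext ?_ ?_
    · show pushout.inl (attach (stage i gf n).2.2) (sumIncl (stage i gf n).2.2)
          ≫ pushout.desc ln (sigmaDesc fun q => (lf q).l) _ ≫ p
        = pushout.inl (attach (stage i gf n).2.2) (sumIncl (stage i gf n).2.2)
          ≫ ιs i gf (n+1) ≫ bot
      rw [← Category.assoc, pushout.inl_desc, hln, ← Category.assoc,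
        show pushout.inl (attach (stage i gf n).2.2) (sumIncl (stage i gf n).2.2)
          ≫ ιs i gf (n+1) = ιs i gf n from ιs_w i gf n]
    · refine sigma_hom_ext fun q => ?_
      show sigmaι (cellFam (stage i gf n).2.2) q
          ≫ pushout.inr (attach (stage i gf n).2.2) (sumIncl (stage i gf n).2.2)
          ≫ pushout.desc ln (sigmaDesc fun q => (lf q).l) _ ≫ p
        = sigmaι (cellFam (stage i gf n).2.2) q
          ≫ pushout.inr (attach (stage i gf n).2.2) (sumIncl (stage i gf n).2.2)
          ≫ ιs i gf (n+1) ≫ bot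
      simp only [← Category.assoc]
      rw [show sigmaι (cellFam (stage i gf n).2.2) q
          ≫ pushout.inr (attach (stage i gf n).2.2) (sumIncl (stage i gf n).2.2)
          = cellIn (stage i gf n).2.2 q from rfl]
      rw [show cellIn (stage i gf n).2.2 q ≫ pushout.desc ln (sigmaDesc fun q => (lf q).l) _
          = (lf q).l from by
        show (sigmaι (cellFam (stage i gf n).2.2) q
            ≫ pushout.inr (attach (stage i gf n).2.2) (sumIncl (stage i gf n).2.2))
            ≫ pushout.desc ln (sigmaDesc fun q => (lf q).l) _ = (lf q).l
        rw [Category.assoc, pushout.inr_desc]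
        rfl]
      rw [(lf q).fac_right]
      simp only [Category.assoc]
  · exact pushout.inl_desc _ _ _

end Lift

lemma ιY_innerAnodyne (hi : innerAnodyne i) : innerAnodyne (ιY i gf) := by
  intro E F p hp
  constructor
  intro top bot sq
  haveI hip : HasLiftingProperty i p := hi p hp
  have hsq0 : CommSq (gf ≫ top) i p (inrB i gf ≫ bot) := ⟨by
    calc (gf ≫ top) ≫ p = gf ≫ ιY i gf ≫ bot := by rw [Category.assoc, sq.w]
    _ = (gf ≫ ιY i gf) ≫ bot := by rw [Category.assoc]
    _ = (i ≫ inrB i gf) ≫ bot := by rw [i_inrB]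
    _ = i ≫ inrB i gf ≫ bot := by rw [Category.assoc]⟩
  let ls0 := (hip.sq_hasLift hsq0).exists_lift.some
  let L0 : obj i gf 0 ⟶ E := pushout.desc top ls0.l ls0.fac_left.symm
  have hL0 : L0 ≫ p = ιs i gf 0 ≫ bot := by
    refine pushout.hom_ext ?_ ?_
    · rw [← Category.assoc,
        show pushout.inl gf i ≫ L0 = top from pushout.inl_desc _ _ _, sq.w, ιY,
        Category.assoc]
      rfl
    · rw [← Category.assoc,
        show pushout.inr gf i ≫ L0 = ls0.l from pushout.inr_desc _ _ _, ls0.fac_right,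
        inrB, Category.assoc]
  let LL : ∀ n : ℕ, Σ' (l : obj i gf n ⟶ E), l ≫ p = ιs i gf n ≫ bot :=
    Nat.rec ⟨L0, hL0⟩ (fun n prev =>
      ⟨(liftStep i gf p hp bot n prev.1 prev.2).1,
       (liftStep i gf p hp bot n prev.1 prev.2).2.1⟩)
  have hcompat : ∀ n, nextMap i gf n ≫ (LL (n+1)).1 = (LL n).1 := fun n =>
    (liftStep i gf p hp bot n (LL n).1 (LL n).2).2.2
  let Lc : P0 i gf ⟶ E := colimit.desc (chain i gf)
    ⟨E, NatTrans.ofSequence (F := chain i gf) (G := (Functor.const ℕ).obj E)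
      (fun n => (LL n).1) (fun n => by rw [chain_succ]; exact (hcompat n).trans (Category.comp_id _).symm)⟩
  have hLc : ∀ n, ιs i gf n ≫ Lc = (LL n).1 := fun n => colimit.ι_desc _ _
  refine ⟨⟨⟨Lc, ?_, ?_⟩⟩⟩
  · rw [ιY, Category.assoc, hLc 0]
    exact pushout.inl_desc _ _ _
  · apply colimit.hom_ext
    intro n
    rw [← Category.assoc,
      show colimit.ι (chain i gf) n ≫ Lc = (LL n).1 from hLc n]
    exact (LL n).2

end Core

end St17

/-- For an inner anodyne map `i : A ⟶ B`, an algebraic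
quasi-category `Y` and a morphism `g : F_Q A ⟶ Y`, the pushout `Y ⊔_{F_Q A} F_Q B`
exists in `AlgQ` and the underlying simplicial map of `Y ⟶ Y ⊔_{F_Q A} F_Q B` is
inner anodyne. -/
theorem pushout_along_free_algQ
    (FQ : SSet.{0} ⥤ AlgQ) (adj : FQ ⊣ UQ)
    {A B : SSet.{0}} (i : A ⟶ B) (hi : innerAnodyne i) (Y : AlgQ) (g : FQ.obj A ⟶ Y) :
    ∃ (P : AlgQ) (inl : FQ.obj B ⟶ P) (inr : Y ⟶ P) (w : FQ.map i ≫ inl = g ≫ inr),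
      Nonempty (IsColimit (PushoutCocone.mk inl inr w)) ∧
      innerAnodyne (UQ.map inr) := by
  classical
  haveI hmono : Mono i := St17.innerAnodyne_mono i hi
  set gf : A ⟶ Y.carrier := adj.homEquiv A Y g with hgf
  have w : FQ.map i ≫ (adj.homEquiv B (St17.Pobj i gf)).symm (St17.inrB i gf)
      = g ≫ St17.rHom i gf := by
    apply (adj.homEquiv A (St17.Pobj i gf)).injective
    rw [Adjunction.homEquiv_naturality_left, Adjunction.homEquiv_naturality_right]
    erw [Equiv.apply_symm_apply]
    exact St17.i_inrB i gf
  have hvb : ∀ s : PushoutCocone (FQ.map i) g,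
      gf ≫ (UQ.map s.inr) = i ≫ (adj.homEquiv B s.pt s.inl) := by
    intro s
    have hc := s.condition
    have h1 : (adj.homEquiv A s.pt) (FQ.map i ≫ s.inl)
        = i ≫ adj.homEquiv B s.pt s.inl := adj.homEquiv_naturality_left i s.inl
    have h2 : (adj.homEquiv A s.pt) (g ≫ s.inr)
        = (adj.homEquiv A Y) g ≫ UQ.map s.inr := adj.homEquiv_naturality_right g s.inr
    rw [hgf]
    erw [← h2]
    rw [← hc, h1]
  refine ⟨St17.Pobj i gf, (adj.homEquiv B (St17.Pobj i gf)).symm (St17.inrB i gf),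
    St17.rHom i gf, w, ⟨?_⟩, ?_⟩
  · refine PushoutCocone.IsColimit.mk w
      (fun s => St17.tHom i gf s.pt s.inr (adj.homEquiv B s.pt s.inl) (hvb s))
      (fun s => ?_) (fun s => ?_) (fun s m h1 h2 => ?_)
    · apply (adj.homEquiv B s.pt).injective
      rw [adj.homEquiv_naturality_right]
      erw [Equiv.apply_symm_apply]
      exact St17.inrB_descMap i gf s.pt s.inr _ (hvb s)
    · exact AlgQ.Hom.ext (St17.ιY_descMap i gf s.pt s.inr _ (hvb s))
    · apply AlgQ.Hom.ext
      refine St17.desc_unique i gf s.pt s.inr _ (hvb s) m ?_ ?_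
      · exact congrArg AlgQ.Hom.map h2
      · have h3 := congrArg (adj.homEquiv B s.pt) h1
        rw [adj.homEquiv_naturality_right] at h3
        erw [Equiv.apply_symm_apply] at h3
        exact h3
  · exact St17.ιY_innerAnodyne i gf hi

end AlgebraicModels
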